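/- If H is a simple graph with exactly n-3 edges, no isolated vertices, n vertices (n ≥ 8), and H contains adjacent vertices u, v' with d(u) + d(v') = n - 2 and d(u) ∈ {1, n-3} and such that the component containing u has exactly n-3 edges, then that component is the star K_{1,n-3} and H = K_{1,n-3} ∪ K_2. -/

import Mathlib

open SimpleGraph

/-- Let `H` be a graph on `n ≥ 8` vertices with `n - 2` edges in total and no
isolated vertex. If `H` has adjacent vertices `u`, `v'` with `d(u) + d(v') = n - 2`,
`d(u) ∈ {1, n-3}`, and the component of `u` has exactly `n - 3` edges, then that
component is the star `K_{1,n-3}` and `H = K_{1,n-3} ∪ K₂`. -/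
theorem eq_star_union_edge
    {V : Type*} [Fintype V] [DecidableEq V] (H : SimpleGraph V) [DecidableRel H.Adj]
    (n : ℕ) (hn : Fintype.card V = n) (h8 : 8 ≤ n)
    (hedges : H.edgeFinset.card = n - 2)
    (hiso : ∀ v : V, 0 < H.degree v)
    (u v' : V) (hadj : H.Adj u v')
    (hsum : H.degree u + H.degree v' = n - 2)
    (hdu : H.degree u = 1 ∨ H.degree u = n - 3)
    (hcomp : (H.induce {v | H.Reachable u v}).edgeSet.ncard = n - 3) :
    Nonempty (H.induce {v | H.Reachable u v} ≃g
        completeBipartiteGraph (Fin 1) (Fin (n - 3))) ∧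
      Nonempty (H ≃g
        completeBipartiteGraph (Fin 1) (Fin (n - 3)) ⊕g (⊤ : SimpleGraph (Fin 2))) := by
  classical
  set S : Set V := {v | H.Reachable u v} with hSdef
  -- Choose the center `w` of the star.
  obtain ⟨w, hdw, hR⟩ : ∃ w, H.degree w = n - 3 ∧ H.Reachable u w := by
    rcases hdu with h1 | h3
    · exact ⟨v', by omega, hadj.reachable⟩
    · exact ⟨u, h3, Reachable.refl u⟩
  have hwS : w ∈ S := hR
  have hclosed : ∀ {x y : V}, x ∈ S → H.Adj x y → y ∈ S :=
    fun hx h => hx.trans h.reachable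
  set N : Finset V := H.neighborFinset w with hNdef
  have hNcard : N.card = n - 3 := by
    rw [hNdef, H.card_neighborFinset_eq_degree, hdw]
  have hwN : w ∉ N := by simp [hNdef]
  have hNS : ∀ x ∈ N, x ∈ S := by
    intro x hx
    exact hclosed hwS (by simpa [hNdef, mem_neighborFinset] using hx)
  -- Edges inside the component of `u`.
  set edgesIn : Finset (Sym2 V) := H.edgeFinset.filter (fun e => ∀ x ∈ e, x ∈ S)
    with hEIdef
  have himg : Sym2.map (Subtype.val : ↥S → V) '' (H.induce S).edgeSet = ↑edgesIn := by
    ext e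
    constructor
    · rintro ⟨e', he', rfl⟩
      induction e' using Sym2.ind with
      | _ a b =>
        have hab : H.Adj a.val b.val := by simpa using he'
        simp only [Sym2.map_pair_eq, hEIdef, Finset.coe_filter, Set.mem_setOf_eq,
          mem_edgeFinset, mem_edgeSet]
        refine ⟨hab, ?_⟩
        intro x hx
        rcases Sym2.mem_iff.mp hx with rfl | rfl
        · exact a.prop
        · exact b.prop
    · intro he
      induction e using Sym2.ind with
      | _ a b =>
        simp only [hEIdef, Finset.coe_filter, Set.mem_setOf_eq, mem_edgeFinset,
          mem_edgeSet] at he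
        obtain ⟨hab, hmem⟩ := he
        have ha : a ∈ S := hmem a (by simp)
        have hb : b ∈ S := hmem b (by simp)
        exact ⟨s(⟨a, ha⟩, ⟨b, hb⟩), by simpa using hab, by simp⟩
  have hIn : edgesIn.card = n - 3 := by
    have h1 : (↑edgesIn : Set (Sym2 V)).ncard = n - 3 := by
      rw [← himg, Set.ncard_image_of_injective _ (Sym2.map.injective Subtype.val_injective)]
      exact hcomp
    rwa [Set.ncard_coe_finset] at h1
  have hinc : H.incidenceFinset w = edgesIn := by
    apply Finset.eq_of_subset_of_card_le
    · intro e he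
      rw [mem_incidenceFinset] at he
      obtain ⟨hee, hwe⟩ := he
      induction e using Sym2.ind with
      | _ a b =>
        have hab : H.Adj a b := hee
        simp only [hEIdef, Finset.mem_filter, mem_edgeFinset, mem_edgeSet]
        refine ⟨hab, ?_⟩
        have hha : a ∈ S ∧ b ∈ S := by
          rcases Sym2.mem_iff.mp hwe with rfl | rfl
          · exact ⟨hwS, hclosed hwS hab⟩
          · exact ⟨hclosed hwS hab.symm, hwS⟩
        intro x hx
        rcases Sym2.mem_iff.mp hx with rfl | rfl
        · exact hha.1
        · exact hha.2
    · rw [hIn, H.card_incidenceFinset_eq_degree, hdw]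
  have hkey : ∀ x y : V, H.Adj x y → x ∈ S → x = w ∨ y = w := by
    intro x y hxy hx
    have hmem : s(x, y) ∈ edgesIn := by
      simp only [hEIdef, Finset.mem_filter, mem_edgeFinset, mem_edgeSet]
      refine ⟨hxy, ?_⟩
      intro z hz
      rcases Sym2.mem_iff.mp hz with rfl | rfl
      · exact hx
      · exact hclosed hx hxy
    rw [← hinc, mem_incidenceFinset] at hmem
    rcases Sym2.mem_iff.mp hmem.2 with h | h
    · exact Or.inl h.symm
    · exact Or.inr h.symm
  have hSeq : ∀ v : V, v ∈ S ↔ v = w ∨ v ∈ N := by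
    intro v
    constructor
    · intro hv
      by_cases h : v = w
      · exact Or.inl h
      · obtain ⟨y, hy⟩ := (H.degree_pos_iff_exists_adj v).mp (hiso v)
        rcases hkey v y hy hv with h' | rfl
        · exact absurd h' h
        · exact Or.inr (by simpa [hNdef, mem_neighborFinset] using hy.symm)
    · rintro (rfl | h)
      · exact hwS
      · exact hNS v h
  set Oset : Finset V := (insert w N)ᶜ with hOdef
  have hOmem : ∀ v : V, v ∈ Oset ↔ v ∉ S := by
    intro v
    simp [hOdef, Finset.mem_compl, Finset.mem_insert, hSeq v]
  have hScard : (insert w N).card = n - 2 := by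
    rw [Finset.card_insert_of_notMem hwN, hNcard]; omega
  have hOcard : Oset.card = 2 := by
    rw [hOdef, Finset.card_compl, hn, hScard]; omega
  have hOadj : ∀ x y : V, x ∈ Oset → y ∈ Oset → x ≠ y → H.Adj x y := by
    intro x y hx hy hne
    obtain ⟨y', hy'⟩ := (H.degree_pos_iff_exists_adj x).mp (hiso x)
    have hy'O : y' ∈ Oset := by
      rw [hOmem]
      intro hY
      exact (hOmem x).mp hx (hclosed hY hy'.symm)
    have hxy : ({x, y} : Finset V) = Oset := by
      apply Finset.eq_of_subset_of_card_le
      · intro z hz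
        rcases Finset.mem_insert.mp hz with rfl | hz
        · exact hx
        · rwa [Finset.mem_singleton.mp hz]
      · rw [hOcard, Finset.card_insert_of_notMem (by simpa using hne),
          Finset.card_singleton]
    have : y' ∈ ({x, y} : Finset V) := hxy ▸ hy'O
    rcases Finset.mem_insert.mp this with rfl | h
    · exact absurd rfl hy'.ne'
    · rwa [Finset.mem_singleton.mp h] at hy'
  have hAdjIff : ∀ x y : V, H.Adj x y ↔
      ((x = w ∧ y ∈ N) ∨ (y = w ∧ x ∈ N) ∨ (x ∈ Oset ∧ y ∈ Oset ∧ x ≠ y)) := by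
    intro x y
    constructor
    · intro h
      by_cases hx : x ∈ S
      · rcases hkey x y h hx with rfl | rfl
        · exact Or.inl ⟨rfl, by simpa [hNdef, mem_neighborFinset] using h⟩
        · exact Or.inr (Or.inl ⟨rfl, by simpa [hNdef, mem_neighborFinset] using h.symm⟩)
      · have hy : y ∉ S := fun hy => hx (hclosed hy h.symm)
        exact Or.inr (Or.inr ⟨(hOmem x).mpr hx, (hOmem y).mpr hy, h.ne⟩)
    · rintro (⟨hx, h⟩ | ⟨hy, h⟩ | ⟨hx, hy, hne⟩)
      · rw [hx]; rwa [hNdef, mem_neighborFinset] at h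
      · rw [hy]; rw [hNdef, mem_neighborFinset] at h; exact h.symm
      · exact hOadj x y hx hy hne
  -- Equivalences with `Fin` types.
  have hNcard' : Fintype.card ↥N = n - 3 := by rw [Fintype.card_coe]; exact hNcard
  have hOcard' : Fintype.card ↥Oset = 2 := by rw [Fintype.card_coe]; exact hOcard
  let eN : ↥N ≃ Fin (n - 3) := Fintype.equivFinOfCardEq hNcard'
  let eO : ↥Oset ≃ Fin 2 := (Fintype.equivFinOfCardEq hOcard')
  have hxw_of_N : ∀ x ∈ N, x ≠ w := by
    intro x hx h; exact hwN (h ▸ hx)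
  have hwO : w ∉ Oset := fun h => (hOmem w).mp h hwS
  have hONdisj : ∀ x ∈ Oset, x ≠ w ∧ x ∉ N := by
    intro x hx
    have := (hOmem x).mp hx
    rw [hSeq] at this
    push_neg at this
    exact this
  constructor
  · -- the component is the star
    refine ⟨⟨⟨?_, ?_, ?_, ?_⟩, ?_⟩⟩
    · exact fun x => if h : x.val = w then Sum.inl 0 else
        Sum.inr (eN ⟨x.val, ((hSeq x.val).mp x.prop).resolve_left h⟩)
    · exact Sum.elim (fun _ => ⟨w, hwS⟩) (fun j => ⟨(eN.symm j).val, hNS _ (eN.symm j).prop⟩)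
    · intro x
      by_cases h : x.val = w
      · simp only [dif_pos h, Sum.elim_inl]
        exact Subtype.ext h.symm
      · simp only [dif_neg h, Sum.elim_inr, Equiv.symm_apply_apply]
    · intro s
      rcases s with i | j
      · dsimp only [Sum.elim_inl]; rw [dif_pos rfl]
        exact congrArg Sum.inl (Subsingleton.elim _ _)
      · have h : (eN.symm j).val ≠ w := hxw_of_N _ (eN.symm j).prop
        dsimp only [Sum.elim_inr]; rw [dif_neg h]
        congr 1
        rw [show (⟨(eN.symm j).val, _⟩ : ↥N) = eN.symm j from Subtype.ext rfl,
          Equiv.apply_symm_apply]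
    · intro a b
      simp only [Equiv.coe_fn_mk, comap_adj, Function.Embedding.coe_subtype]
      rw [hAdjIff]
      have haO : (a : V) ∉ Oset := fun h => (hOmem _).mp h a.prop
      have hbO : (b : V) ∉ Oset := fun h => (hOmem _).mp h b.prop
      by_cases ha : (a : V) = w <;> by_cases hb : (b : V) = w
      · simp [dif_pos ha, dif_pos hb, ha, hb, hwN, haO]
      · have hbN : (b : V) ∈ N := ((hSeq _).mp b.prop).resolve_left hb
        simp [dif_pos ha, dif_neg hb, ha, hb, hbN, haO]
      · have haN : (a : V) ∈ N := ((hSeq _).mp a.prop).resolve_left ha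
        simp [dif_neg ha, dif_pos hb, ha, hb, haN, haO]
      · simp [dif_neg ha, dif_neg hb, ha, hb, haO]
  · -- the whole graph
    refine ⟨⟨⟨?_, ?_, ?_, ?_⟩, ?_⟩⟩
    · exact fun x => if h : x = w then Sum.inl (Sum.inl 0) else
        if h2 : x ∈ N then Sum.inl (Sum.inr (eN ⟨x, h2⟩)) else
        Sum.inr (eO ⟨x, (hOmem x).mpr (fun hx => (by
          rcases (hSeq x).mp hx with h' | h'
          · exact h h'
          · exact h2 h'))⟩)
    · exact Sum.elim (Sum.elim (fun _ => w) (fun j => (eN.symm j).val))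
        (fun k => (eO.symm k).val)
    · intro x
      by_cases h : x = w
      · simp only [dif_pos h, Sum.elim_inl]; exact h.symm
      · by_cases h2 : x ∈ N
        · simp only [dif_neg h, dif_pos h2, Sum.elim_inl, Sum.elim_inr,
            Equiv.symm_apply_apply]
        · simp only [dif_neg h, dif_neg h2, Sum.elim_inr, Equiv.symm_apply_apply]
    · intro s
      rcases s with (i | j) | k
      · dsimp only [Sum.elim_inl]; rw [dif_pos rfl]
        exact congrArg Sum.inl (congrArg Sum.inl (Subsingleton.elim _ _))
      · have h : (eN.symm j).val ≠ w := hxw_of_N _ (eN.symm j).prop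
        dsimp only [Sum.elim_inl, Sum.elim_inr]; rw [dif_neg h, dif_pos (eN.symm j).prop]
        rw [show (⟨(eN.symm j).val, _⟩ : ↥N) = eN.symm j from Subtype.ext rfl,
          Equiv.apply_symm_apply]
      · obtain ⟨h1, h2⟩ := hONdisj _ (eO.symm k).prop
        dsimp only [Sum.elim_inr]; rw [dif_neg h1, dif_neg h2]
        rw [show (⟨(eO.symm k).val, _⟩ : ↥Oset) = eO.symm k from Subtype.ext rfl,
          Equiv.apply_symm_apply]
    · intro a b
      simp only [Equiv.coe_fn_mk]
      rw [hAdjIff]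
      have htri : ∀ x : V, (x = w ∧ x ∉ N ∧ x ∉ Oset) ∨
          (¬ x = w ∧ x ∈ N ∧ x ∉ Oset) ∨ (¬ x = w ∧ x ∉ N ∧ x ∈ Oset) := by
        intro x
        by_cases h1 : x = w
        · refine Or.inl ⟨h1, h1 ▸ hwN, fun hx => ?_⟩
          exact (hOmem x).mp hx (h1 ▸ hwS)
        · by_cases h2 : x ∈ N
          · refine Or.inr (Or.inl ⟨h1, h2, fun hx => ?_⟩)
            exact (hOmem x).mp hx (hNS x h2)
          · refine Or.inr (Or.inr ⟨h1, h2, ?_⟩)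
            rw [hOmem, hSeq]; push_neg; exact ⟨h1, h2⟩
      rcases htri a with ⟨ha1, ha2, ha3⟩ | ⟨ha1, ha2, ha3⟩ | ⟨ha1, ha2, ha3⟩ <;>
        rcases htri b with ⟨hb1, hb2, hb3⟩ | ⟨hb1, hb2, hb3⟩ | ⟨hb1, hb2, hb3⟩ <;>
        simp [ha1, ha2, ha3, hb1, hb2, hb3, hwN, hwO, Subtype.ext_iff, Ne, eq_comm]
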